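/- arXiv:1812.06248 — 7 statements merged into one kernel-verified Lean document; each statement's English description precedes it below -/
import Mathlib

section
/- The extension R ↦ R* of binary relations commutes with union: for R, S ⊆ X × X, (R ∪ S)* = R* ∪ S*; moreover it commutes with inversion: (R⁻¹)* = (R*)⁻¹. -/
theorem stmt5 {X : Type*} (R S : X → X → Prop) (u v : Ultrafilter X) :
    ((∀ A ∈ u, ∀ B ∈ v, ∃ x ∈ A, ∃ y ∈ B, R x y ∨ S x y) ↔
      ((∀ A ∈ u, ∀ B ∈ v, ∃ x ∈ A, ∃ y ∈ B, R x y) ∨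
        (∀ A ∈ u, ∀ B ∈ v, ∃ x ∈ A, ∃ y ∈ B, S x y))) ∧
    ((∀ A ∈ u, ∀ B ∈ v, ∃ x ∈ A, ∃ y ∈ B, R y x) ↔
      (∀ B ∈ v, ∀ A ∈ u, ∃ y ∈ B, ∃ x ∈ A, R y x)) := by
  constructor
  · constructor
    · intro h
      by_contra hc
      push_neg at hc
      obtain ⟨⟨A₁, hA₁, B₁, hB₁, h₁⟩, A₂, hA₂, B₂, hB₂, h₂⟩ := hc
      obtain ⟨x, hx, y, hy, hxy⟩ := h (A₁ ∩ A₂) (u.toFilter.inter_sets hA₁ hA₂)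
        (B₁ ∩ B₂) (v.toFilter.inter_sets hB₁ hB₂)
      rcases hxy with h | h
      · exact h₁ x hx.1 y hy.1 h
      · exact h₂ x hx.2 y hy.2 h
    · rintro (h | h) A hA B hB
      · obtain ⟨x, hx, y, hy, hxy⟩ := h A hA B hB
        exact ⟨x, hx, y, hy, Or.inl hxy⟩
      · obtain ⟨x, hx, y, hy, hxy⟩ := h A hA B hB
        exact ⟨x, hx, y, hy, Or.inr hxy⟩
  · constructor
    · intro h B hB A hA
      obtain ⟨x, hx, y, hy, hxy⟩ := h A hA B hB
      exact ⟨y, hy, x, hx, hxy⟩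
    · intro h A hA B hB
      obtain ⟨y, hy, x, hx, hxy⟩ := h B hB A hA
      exact ⟨x, hx, y, hy, hxy⟩
end

section
/- Let X₁,…,Xₙ be topological spaces with dense subsets D₁,…,Dₙ, and let Y be a Hausdorff space. If two n-ary maps f, g : X₁ × … × Xₙ → Y are both right continuous with respect to D₁,…,D_{n-1} (i.e. for each i, fixing points of D₁,…,D_{i-1} in the first i−1 coordinates and arbitrary points in coordinates i+1,…,n, the resulting unary map on X_i is continuous) and f, g coincide on D₁ × … × Dₙ, then f = g. It suffices to prove the case n = 2: if f, g : X₁ × X₂ → Y satisfy: x ↦ f(x, x₂) is continuous for every x₂ ∈ X₂, x ↦ f(a, x) is continuous for every a ∈ D₁ (and likewise for g), and f = g on D₁ × D₂, then f = g. -/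
theorem stmt8 {X₁ X₂ Y : Type*} [TopologicalSpace X₁] [TopologicalSpace X₂]
    [TopologicalSpace Y] [T2Space Y]
    (D₁ : Set X₁) (D₂ : Set X₂) (hD₁ : Dense D₁) (hD₂ : Dense D₂)
    (f g : X₁ × X₂ → Y)
    (hf1 : ∀ x₂ : X₂, Continuous fun x => f (x, x₂))
    (hf2 : ∀ a ∈ D₁, Continuous fun x => f (a, x))
    (hg1 : ∀ x₂ : X₂, Continuous fun x => g (x, x₂))
    (hg2 : ∀ a ∈ D₁, Continuous fun x => g (a, x))
    (heq : ∀ a ∈ D₁, ∀ b ∈ D₂, f (a, b) = g (a, b)) :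
    f = g := by
  have h1 : ∀ a ∈ D₁, ∀ x₂ : X₂, f (a, x₂) = g (a, x₂) := by
    intro a ha x₂
    exact congrFun (Continuous.ext_on hD₂ (hf2 a ha) (hg2 a ha) (fun b hb => heq a ha b hb)) x₂
  funext p
  exact congrFun (Continuous.ext_on hD₁ (hf1 p.2) (hg1 p.2) (fun a ha => h1 a ha p.2)) p.1
end

section
/- Let X₁, X₂ be topological spaces, D₁ ⊆ X₁, and Y a Hausdorff space. The set RC of binary maps X₁ × X₂ → Y right continuous w.r.t. D₁, endowed with the topology of pointwise convergence at points of D₁ × D₂ for dense D₁ ⊆ X₁, D₂ ⊆ X₂ (subbasic open sets O_{a,B} = {f ∈ RC : f(a) ∈ B} for a ∈ D₁ × D₂ and open B ⊆ Y), is a Hausdorff topological space. -/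
/-- Binary maps `X₁ × X₂ → Y` that are right continuous w.r.t. `D₁`. -/
def RCbin {X₁ X₂ Y : Type*} [TopologicalSpace X₁] [TopologicalSpace X₂] [TopologicalSpace Y]
    (D₁ : Set X₁) : Type _ :=
  {f : X₁ × X₂ → Y //
    (∀ x₂ : X₂, Continuous fun x => f (x, x₂)) ∧ ∀ a ∈ D₁, Continuous fun x => f (a, x)}

theorem stmt9 {X₁ X₂ Y : Type*} [TopologicalSpace X₁] [TopologicalSpace X₂] [TopologicalSpace Y]
    [T2Space Y] (D₁ : Set X₁) (D₂ : Set X₂) (hD₁ : Dense D₁) (hD₂ : Dense D₂) :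
    @T2Space (RCbin (X₂ := X₂) (Y := Y) D₁)
      (TopologicalSpace.generateFrom
        {S | ∃ a₁ ∈ D₁, ∃ a₂ ∈ D₂, ∃ B : Set Y, IsOpen B ∧
          S = {f : RCbin (X₂ := X₂) (Y := Y) D₁ | f.1 (a₁, a₂) ∈ B}}) := by
  letI : TopologicalSpace (RCbin (X₂ := X₂) (Y := Y) D₁) :=
    TopologicalSpace.generateFrom
      {S | ∃ a₁ ∈ D₁, ∃ a₂ ∈ D₂, ∃ B : Set Y, IsOpen B ∧
        S = {f : RCbin (X₂ := X₂) (Y := Y) D₁ | f.1 (a₁, a₂) ∈ B}}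
  refine ⟨fun f g hfg => ?_⟩
  have hne : ∃ a₁ ∈ D₁, ∃ a₂ ∈ D₂, f.1 (a₁, a₂) ≠ g.1 (a₁, a₂) := by
    by_contra h
    push_neg at h
    apply hfg
    have hD : ∀ a ∈ D₁, (fun x => f.1 (a, x)) = fun x => g.1 (a, x) := fun a ha =>
      Continuous.ext_on hD₂ (f.2.2 a ha) (g.2.2 a ha) (fun x hx => h a ha x hx)
    have hfg' : f.1 = g.1 := by
      funext p
      have h2 : (fun x => f.1 (x, p.2)) = fun x => g.1 (x, p.2) :=
        Continuous.ext_on hD₁ (f.2.1 p.2) (g.2.1 p.2)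
          (fun a ha => congrFun (hD a ha) p.2)
      exact congrFun h2 p.1
    exact Subtype.ext hfg'
  obtain ⟨a₁, ha₁, a₂, ha₂, hne⟩ := hne
  obtain ⟨U, V, hU, hV, hfU, hgV, hUV⟩ := t2_separation hne
  refine ⟨{h | h.1 (a₁, a₂) ∈ U}, {h | h.1 (a₁, a₂) ∈ V},
    TopologicalSpace.isOpen_generateFrom_of_mem ⟨a₁, ha₁, a₂, ha₂, U, hU, rfl⟩,
    TopologicalSpace.isOpen_generateFrom_of_mem ⟨a₁, ha₁, a₂, ha₂, V, hV, rfl⟩,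
    hfU, hgV, ?_⟩
  exact Set.disjoint_left.2 fun h hhU hhV => Set.disjoint_left.1 hUV hhU hhV
end

section
/- Let X be a discrete space and Y a compact Hausdorff space. The set C(βX, Y) of continuous maps from the space of ultrafilters over X to Y, endowed with the topology of pointwise convergence at principal ultrafilters (subbasic open sets {f : f(a) ∈ B} for a ∈ X, B ⊆ Y open), is homeomorphic to the product space Y^X; in particular it is compact Hausdorff. -/
/-- Continuous maps from the space of ultrafilters over `X` into `Y`. -/
def ContUltra (X Y : Type*) [TopologicalSpace Y] : Type _ :=
  {f : Ultrafilter X → Y // Continuous f}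

/-- The topology of pointwise convergence at principal ultrafilters on `ContUltra X Y`. -/
def principalTop (X Y : Type*) [TopologicalSpace Y] : TopologicalSpace (ContUltra X Y) :=
  TopologicalSpace.generateFrom
    {S | ∃ (a : X) (B : Set Y), IsOpen B ∧ S = {f : ContUltra X Y | f.1 (pure a) ∈ B}}

theorem stmt10 {X Y : Type*} [TopologicalSpace Y] [CompactSpace Y] [T2Space Y] :
    (∃ e : @Homeomorph (ContUltra X Y) (X → Y) (principalTop X Y) inferInstance,
        ∀ (f : ContUltra X Y) (a : X), e f a = f.1 (pure a)) ∧
    @CompactSpace (ContUltra X Y) (principalTop X Y) ∧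
    @T2Space (ContUltra X Y) (principalTop X Y) := by
  letI : TopologicalSpace (ContUltra X Y) := principalTop X Y
  have hext : ∀ g : X → Y, Ultrafilter.extend g ∘ (pure : X → Ultrafilter X) = g :=
    fun g => ultrafilter_extend_extends g
  let heq : Equiv (ContUltra X Y) (X → Y) :=
    { toFun := fun f a => f.1 (pure a)
      invFun := fun g => ⟨Ultrafilter.extend g, continuous_ultrafilter_extend g⟩
      left_inv := by
        rintro ⟨f, hf⟩
        refine Subtype.ext ?_
        exact (Continuous.ext_on denseRange_pure (continuous_ultrafilter_extend _) hf
          (by rintro _ ⟨a, rfl⟩; exact congrFun (hext (fun a => f (pure a))) a))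
      right_inv := fun g => hext g }
  have hcont : Continuous heq := by
    refine continuous_pi fun a => ?_
    rw [continuous_def]
    intro B hB
    exact TopologicalSpace.GenerateOpen.basic _ ⟨a, B, hB, rfl⟩
  have hcont2 : Continuous heq.symm := by
    refine continuous_generateFrom_iff.2 ?_
    rintro S ⟨a, B, hB, rfl⟩
    have : heq.symm ⁻¹' {f : ContUltra X Y | f.1 (pure a) ∈ B} = {g : X → Y | g a ∈ B} := by
      ext g
      simp only [Set.mem_preimage, Set.mem_setOf_eq]
      rw [show (heq.symm g).1 (pure a) = g a from congrFun (hext g) a]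
    rw [this]
    exact (continuous_apply (A := fun _ : X => Y) a).isOpen_preimage B hB
  let e : @Homeomorph (ContUltra X Y) (X → Y) (principalTop X Y) inferInstance :=
    { heq with continuous_toFun := hcont, continuous_invFun := hcont2 }
  refine ⟨⟨e, fun f a => rfl⟩, ?_, ?_⟩
  · exact e.symm.compactSpace
  · exact e.symm.symm.isEmbedding.t2Space
end

section
/- Let X be an infinite discrete space and Y a compact Hausdorff space with at least two points. The evaluation map ext : Y^X → C(βX, Y), g ↦ g̃, has a continuous extension ẽxt : β(Y^X) → C(βX, Y) (where Y^X is discrete and C(βX, Y) carries the topology of pointwise convergence at principal ultrafilters), and ẽxt is surjective but not injective. -/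
/-- Two continuous maps on ultrafilter space agreeing at principal points are equal. -/
lemma extPure_aux {A Y : Type*} [TopologicalSpace Y] [T2Space Y]
    {f g : Ultrafilter A → Y} (hf : Continuous f) (hg : Continuous g)
    (h : ∀ a, f (pure a) = g (pure a)) : f = g :=
  Continuous.ext_on denseRange_pure hf hg (by rintro _ ⟨a, rfl⟩; exact h a)

theorem stmt12 {X Y : Type*} [Infinite X] [TopologicalSpace Y] [CompactSpace Y] [T2Space Y]
    (hY : ∃ y₁ y₂ : Y, y₁ ≠ y₂) :
    (∃ e : Ultrafilter (X → Y) → ContUltra X Y,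
        @Continuous _ _ _ (principalTop X Y) e ∧
        ∀ (g : X → Y) (a : X), (e (pure g)).1 (pure a) = g a) ∧
    (∀ e : Ultrafilter (X → Y) → ContUltra X Y,
        @Continuous _ _ _ (principalTop X Y) e →
        (∀ (g : X → Y) (a : X), (e (pure g)).1 (pure a) = g a) →
        Function.Surjective e ∧ ¬ Function.Injective e) := by
  classical
  obtain ⟨y₁, y₂, hy⟩ := hY
  -- evaluation at a principal ultrafilter is continuous for `principalTop`
  have hev : ∀ a : X, @Continuous _ _ (principalTop X Y) _
      (fun f : ContUltra X Y => f.1 (pure a)) := by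
    intro a
    rw [@continuous_def _ _ (principalTop X Y) _]
    intro B hB
    exact TopologicalSpace.GenerateOpen.basic _ ⟨a, B, hB, rfl⟩
  -- the canonical extension
  set E : Ultrafilter (X → Y) → ContUltra X Y := fun U =>
    ⟨Ultrafilter.extend (fun x => Ultrafilter.extend (fun g : X → Y => g x) U),
     continuous_ultrafilter_extend _⟩ with hEdef
  have hE1 : ∀ (U : Ultrafilter (X → Y)) (a : X),
      (E U).1 (pure a) = Ultrafilter.extend (fun g : X → Y => g a) U := fun U a =>
    congrFun (ultrafilter_extend_extends _) a
  have hEc : @Continuous _ _ _ (principalTop X Y) E := by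
    unfold principalTop
    rw [continuous_generateFrom_iff]
    rintro S ⟨a, B, hB, rfl⟩
    have hpre : E ⁻¹' {f : ContUltra X Y | f.1 (pure a) ∈ B}
        = (Ultrafilter.extend (fun g : X → Y => g a)) ⁻¹' B := by
      ext U
      simp only [Set.mem_preimage, Set.mem_setOf_eq]
      have h := congrFun (ultrafilter_extend_extends
        (fun x => Ultrafilter.extend (fun g : X → Y => g x) U)) a
      simp only [Function.comp_apply] at h
      rw [hE1]
    rw [hpre]
    exact (continuous_ultrafilter_extend _).isOpen_preimage B hB
  have hEpure : ∀ (g : X → Y) (a : X), (E (pure g)).1 (pure a) = g a := by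
    intro g a
    rw [hE1]
    exact congrFun (ultrafilter_extend_extends _) g
  refine ⟨⟨E, hEc, hEpure⟩, ?_⟩
  intro e he hpure
  -- e agrees with the canonical extension at principal points of βX
  have key : ∀ (a : X) (U : Ultrafilter (X → Y)),
      (e U).1 (pure a) = Ultrafilter.extend (fun g : X → Y => g a) U := by
    intro a
    have h1 := @Continuous.comp _ _ _ _ (principalTop X Y) _ _ _ (hev a) he
    have h2 : ∀ g : X → Y, ((fun f : ContUltra X Y => f.1 (pure a)) ∘ e) (pure g)
        = Ultrafilter.extend (fun g : X → Y => g a) (pure g) := by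
      intro g
      simp only [Function.comp_apply]
      rw [hpure g a]
      exact (congrFun (ultrafilter_extend_extends (fun g : X → Y => g a)) g).symm
    have h3 := extPure_aux h1 (continuous_ultrafilter_extend (fun g : X → Y => g a)) h2
    exact fun U => congrFun h3 U
  constructor
  · -- surjectivity
    intro F
    refine ⟨pure (fun a => F.1 (pure a)), ?_⟩
    exact Subtype.ext (extPure_aux (e _).2 F.2 (fun a => hpure _ a))
  · -- non-injectivity
    intro hinj
    set φ : X → (X → Y) := fun x z => if z = x then y₂ else y₁ with hφ
    set W : Ultrafilter X := Ultrafilter.of (Filter.cofinite : Filter X) with hWdef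
    have hWle : (W : Filter X) ≤ Filter.cofinite := Ultrafilter.of_le _
    set U : Ultrafilter (X → Y) := W.map φ with hUdef
    have hU : e U = e (pure (fun _ => y₁)) := by
      apply Subtype.ext
      apply extPure_aux (e U).2 (e _).2
      intro a
      rw [hpure, key a U]
      apply ultrafilter_extend_eq_iff.mpr
      intro s hs
      have hy₁s : y₁ ∈ s := mem_of_mem_nhds hs
      have hmem : {x : X | φ x a ∈ s} ∈ W := by
        apply Filter.mem_of_superset (hWle ((Set.finite_singleton a).compl_mem_cofinite))
        intro x hx
        have hxa : x ≠ a := hx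
        simp only [hφ, Set.mem_setOf_eq, if_neg (Ne.symm hxa)]
        exact hy₁s
      simpa [hUdef, Ultrafilter.mem_map, Set.preimage] using hmem
    have hUeq : U = pure (fun _ => y₁) := hinj hU
    have hc : ({fun _ => y₁} : Set (X → Y)) ∈ U := by
      rw [hUeq]; exact rfl
    have hpreim : φ ⁻¹' ({fun _ => y₁} : Set (X → Y)) = ∅ := by
      ext x
      simp only [Set.mem_preimage, Set.mem_singleton_iff, Set.mem_empty_iff_false, iff_false]
      intro hfx
      have := congrFun hfx x
      simp [hφ] at this
      exact hy this.symm
    have : (∅ : Set X) ∈ W := by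
      have := (Ultrafilter.mem_map).mp hc
      rwa [hpreim] at this
    exact Filter.empty_notMem (W : Filter X) this
end

section
/- Let X, Y be sets and 𝔣 an ultrafilter over Y^X. Define app̃(u, 𝔣) for an ultrafilter u over X as the ultrafilter {S ⊆ Y : {x : {g : g(x) ∈ S} ∈ 𝔣} ∈ u} over Y. Then 𝔣 is pseudo-principal (app̃(a, 𝔣) is principal for each principal a) if and only if the map u ↦ app̃(u, 𝔣) equals f̃ for some f : X → Y, namely f(a) is the point generating app̃(a, 𝔣); here f̃ is the unique continuous extension of f to ultrafilters. -/
/-- The extended application map: `appTilde u 𝔣` is the ultrafilter over `Y` with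
`S ∈ appTilde u 𝔣` iff `{x | {g | g x ∈ S} ∈ 𝔣} ∈ u`. -/
def appTilde {X Y : Type*} (u : Ultrafilter X) (𝔣 : Ultrafilter (X → Y)) : Ultrafilter Y :=
  u.bind fun x => 𝔣.map fun g => g x

theorem stmt15 {X Y : Type*} (𝔣 : Ultrafilter (X → Y)) :
    (∀ (u : Ultrafilter X) (S : Set Y),
        S ∈ appTilde u 𝔣 ↔ {x : X | {g : X → Y | g x ∈ S} ∈ 𝔣} ∈ u) ∧
    ((∀ a : X, ∃ y : Y, appTilde (pure a) 𝔣 = pure y) ↔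
      ∃ f : X → Y, ∀ u : Ultrafilter X, appTilde u 𝔣 = u.map f) ∧
    (∀ f : X → Y, (∀ u : Ultrafilter X, appTilde u 𝔣 = u.map f) →
      ∀ a : X, appTilde (pure a) 𝔣 = pure (f a)) := by
  have hmem : ∀ (u : Ultrafilter X) (S : Set Y),
      S ∈ appTilde u 𝔣 ↔ {x : X | {g : X → Y | g x ∈ S} ∈ 𝔣} ∈ u := by
    intro u S
    rfl
  refine ⟨hmem, ⟨?_, ?_⟩, ?_⟩
  · intro h
    choose f hf using h
    refine ⟨f, fun u => ?_⟩
    ext S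
    rw [hmem, Ultrafilter.mem_map]
    have hx : ∀ x : X, ({g : X → Y | g x ∈ S} ∈ 𝔣 ↔ f x ∈ S) := by
      intro x
      have h1 : S ∈ appTilde (pure x) 𝔣 ↔ {g : X → Y | g x ∈ S} ∈ 𝔣 := by
        rw [hmem]; simp
      rw [← h1, hf x]; simp
    constructor
    · intro hS
      have : {x : X | {g : X → Y | g x ∈ S} ∈ 𝔣} = f ⁻¹' S := by
        ext x; exact hx x
      rwa [this] at hS
    · intro hS
      have : {x : X | {g : X → Y | g x ∈ S} ∈ 𝔣} = f ⁻¹' S := by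
        ext x; exact hx x
      rwa [this]
  · rintro ⟨f, hf⟩ a
    exact ⟨f a, by rw [hf]; simp⟩
  · intro f hf a
    rw [hf]; simp
end

section
/- Let X be an infinite discrete space and Y a compact Hausdorff space with more than one point. The set C(βX, βY) of continuous maps from βX to βY is not closed in the product space (βY)^{βX} with the topology of pointwise convergence; equivalently, C(βX, βY) with the full pointwise convergence topology is not compact. In particular, for every map h : βX → βY (possibly discontinuous) there is an ultrafilter over C(βX, βY) converging to h in (βY)^{βX}. -/
open Classical in
/-- Any prescription of values at finitely many ultrafilters is achieved by a
continuous function `βX → βY`. -/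
lemma exists_cont_agree {X Y : Type*} [Nonempty Y] (I : Finset (Ultrafilter X))
    (h : Ultrafilter X → Ultrafilter Y) :
    ∃ f : Ultrafilter X → Ultrafilter Y, Continuous f ∧ ∀ p ∈ I, f p = h p := by
  have sep : ∀ p q : Ultrafilter X, p ≠ q → ∃ s : Set X, s ∈ p ∧ sᶜ ∈ q := by
    intro p q hpq
    by_contra hc
    push_neg at hc
    apply hpq
    ext s
    constructor
    · intro hs
      have := hc s hs
      rwa [Ultrafilter.compl_notMem_iff] at this
    · intro hs
      by_contra hsp
      have h1 : sᶜ ∈ p := (Ultrafilter.compl_mem_iff_notMem).2 hsp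
      have := hc sᶜ h1
      rw [compl_compl] at this
      exact this hs
  set T : Ultrafilter X → Ultrafilter X → Set X := fun p q =>
    if hpq : p ≠ q then (sep p q hpq).choose else Set.univ with hT
  have hT1 : ∀ p q : Ultrafilter X, p ≠ q → T p q ∈ p := by
    intro p q hpq
    simp only [hT, dif_pos hpq]
    exact (sep p q hpq).choose_spec.1
  have hT2 : ∀ p q : Ultrafilter X, p ≠ q → (T p q)ᶜ ∈ q := by
    intro p q hpq
    simp only [hT, dif_pos hpq]
    exact (sep p q hpq).choose_spec.2
  set S : Ultrafilter X → Ultrafilter X → Set X := fun p q =>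
    if q = p then Set.univ else T p q ∩ (T q p)ᶜ with hS
  set A : Ultrafilter X → Set X := fun p => ⋂ q ∈ I, S p q with hAdef
  have hA : ∀ p : Ultrafilter X, A p ∈ p := by
    intro p
    rw [hAdef]
    rw [show ((⋂ q ∈ I, S p q) ∈ p) ↔ ((⋂ q ∈ I, S p q) ∈ (p : Filter X)) from Iff.rfl]
    rw [Filter.biInter_finset_mem]
    intro q hq
    by_cases hqp : q = p
    · simp [hS, hqp]
    · simp only [hS, if_neg hqp]
      exact Filter.inter_mem (hT1 p q (Ne.symm hqp)) (hT2 q p hqp)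
  have hdisj : ∀ p ∈ I, ∀ q ∈ I, ∀ x : X, x ∈ A p → x ∈ A q → p = q := by
    intro p hp q hq x hxp hxq
    by_contra hpq
    have h1 : x ∈ S p q := by
      have := Set.mem_iInter₂.1 hxp q hq
      exact this
    have h2 : x ∈ S q p := Set.mem_iInter₂.1 hxq p hp
    rw [hS] at h1 h2
    simp only [if_neg (Ne.symm hpq), if_neg hpq] at h1 h2
    exact h2.2 h1.1
  set g : X → Ultrafilter Y := fun x =>
    if hx : ∃ p, p ∈ I ∧ x ∈ A p then h hx.choose
    else pure (Classical.arbitrary Y) with hg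
  have gval : ∀ p ∈ I, ∀ x ∈ A p, g x = h p := by
    intro p hp x hx
    have hex : ∃ q, q ∈ I ∧ x ∈ A q := ⟨p, hp, hx⟩
    rw [hg]
    simp only [dif_pos hex]
    have hspec := hex.choose_spec
    rw [hdisj _ hspec.1 _ hp x hspec.2 hx]
  refine ⟨Ultrafilter.extend g, continuous_ultrafilter_extend g, ?_⟩
  intro p hp
  rw [ultrafilter_extend_eq_iff]
  refine le_trans ?_ (pure_le_nhds _)
  rw [Filter.le_pure_iff]
  show {h p} ∈ Filter.map g (p : Filter X)
  rw [Filter.mem_map]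
  exact Filter.mem_of_superset (hA p) fun x hx => by
    simp only [Set.mem_preimage, Set.mem_singleton_iff]
    exact gval p hp x hx

lemma dense_cont {X Y : Type*} [Nonempty Y] :
    Dense {f : Ultrafilter X → Ultrafilter Y | Continuous f} := by
  intro h
  rw [mem_closure_iff]
  intro o ho hho
  rcases isOpen_pi_iff.1 ho h hho with ⟨I, u, hu, hsub⟩
  rcases exists_cont_agree I h with ⟨f, hf, hfh⟩
  refine ⟨f, hsub ?_, hf⟩
  intro p hp
  rw [hfh p hp]
  exact (hu p hp).2

theorem stmt19 {X Y : Type*} [Infinite X] (hY : ∃ y₁ y₂ : Y, y₁ ≠ y₂) :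
    ¬ IsClosed {f : Ultrafilter X → Ultrafilter Y | Continuous f} ∧
    ¬ IsCompact {f : Ultrafilter X → Ultrafilter Y | Continuous f} ∧
    ∀ h : Ultrafilter X → Ultrafilter Y,
      ∃ 𝔣 : Ultrafilter {f : Ultrafilter X → Ultrafilter Y // Continuous f},
        ((𝔣.map Subtype.val : Ultrafilter (Ultrafilter X → Ultrafilter Y)) :
          Filter (Ultrafilter X → Ultrafilter Y)) ≤ nhds h := by
  classical
  obtain ⟨y₁, y₂, hy⟩ := hY
  haveI : Nonempty Y := ⟨y₁⟩
  -- a discontinuous function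
  set p₀ : Ultrafilter X := Filter.hyperfilter X with hp₀
  have hp₀pure : ∀ x : X, p₀ ≠ pure x := by
    intro x hx
    have : ({x} : Set X) ∈ p₀ := by rw [hx]; exact Filter.mem_pure.2 rfl
    exact Filter.notMem_hyperfilter_of_finite (Set.finite_singleton x) this
  set h₀ : Ultrafilter X → Ultrafilter Y := fun q =>
    if q = p₀ then pure y₁ else pure y₂ with hh₀
  have hh₀cont : ¬ Continuous h₀ := by
    intro hc
    have hmem : p₀ ∈ closure (Set.range (pure : X → Ultrafilter X)) := by
      rw [denseRange_pure.closure_range]; trivial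
    have hmapsto : Set.MapsTo h₀ (Set.range (pure : X → Ultrafilter X))
        ({pure y₂} : Set (Ultrafilter Y)) := by
      rintro q ⟨x, rfl⟩
      simp only [hh₀, if_neg (Ne.symm (hp₀pure x)), Set.mem_singleton_iff]
    have := map_mem_closure hc hmem hmapsto
    rw [closure_singleton] at this
    have h1 : h₀ p₀ = pure y₂ := this
    rw [hh₀] at h1
    simp only [if_pos rfl] at h1
    exact hy (Ultrafilter.pure_injective h1)
  have hne : {f : Ultrafilter X → Ultrafilter Y | Continuous f} ≠ Set.univ := by
    intro he
    exact hh₀cont (he ▸ Set.mem_univ h₀ : h₀ ∈ {f | Continuous f})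
  have hdense : Dense {f : Ultrafilter X → Ultrafilter Y | Continuous f} := dense_cont
  have hnotclosed : ¬ IsClosed {f : Ultrafilter X → Ultrafilter Y | Continuous f} := by
    intro hcl
    exact hne (by rw [← hcl.closure_eq]; exact dense_iff_closure_eq.1 hdense)
  refine ⟨hnotclosed, fun hc => hnotclosed hc.isClosed, ?_⟩
  intro h
  have hmem : h ∈ closure {f : Ultrafilter X → Ultrafilter Y | Continuous f} := hdense h
  rw [mem_closure_iff_ultrafilter] at hmem
  obtain ⟨u, hu, hle⟩ := hmem
  have hrange : Set.range (Subtype.val :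
      {f : Ultrafilter X → Ultrafilter Y // Continuous f} → _) ∈ u := by
    rwa [Subtype.range_val_subtype]
  refine ⟨u.comap Subtype.val_injective hrange, ?_⟩
  have hcoe : ((u.comap Subtype.val_injective hrange).map Subtype.val :
      Filter (Ultrafilter X → Ultrafilter Y)) = (u : Filter _) := by
    rw [Ultrafilter.coe_map, Ultrafilter.coe_comap, Filter.map_comap,
      inf_of_le_left (Filter.le_principal_iff.2 hrange)]
  rw [hcoe]
  exact hle
end
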